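/- arXiv:2405.18962 — 2 statements merged into one kernel-verified Lean document; each statement's English description precedes it below -/
import Mathlib

section
/- With the setup of data explained by (A,B,C,D) with state x: if J_i(x) has full row rank for some i ∈ [0,T−1], then for each k ∈ [0,i], J_k(x) has full row rank, rank H_k = (k+1)m + rank Ω_k, and rank G_k = (k+1)m + rank Ω_{k−1}, where G_k is H_k with its last p rows deleted. -/
open Matrix
noncomputable section

/-- `obsMat A C k` is the observability matrix Ω_k, the stack of C, CA, ..., CA^k. -/
def obsMat {ι : Type*} [Fintype ι] [DecidableEq ι] {p : ℕ}
    (A : Matrix ι ι ℝ) (C : Matrix (Fin p) ι ℝ) (k : ℕ) :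
    Matrix (Fin (k + 1) × Fin p) ι ℝ :=
  Matrix.of fun ir j => (C * A ^ (ir.1 : ℕ)) ir.2 j

/-- `obsRank A C (k+1) = rank Ω_k`; `obsRank A C 0 = rank Ω_{-1} = 0` (void matrix). -/
def obsRank {ι : Type*} [Fintype ι] [DecidableEq ι] {p : ℕ}
    (A : Matrix ι ι ℝ) (C : Matrix (Fin p) ι ℝ) : ℕ → ℕ
  | 0 => 0
  | k + 1 => (obsMat A C k).rank

/-- ρ_k = rank Ω_k − rank Ω_{k-1}. -/
def rho {ι : Type*} [Fintype ι] [DecidableEq ι] {p : ℕ}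
    (A : Matrix ι ι ℝ) (C : Matrix (Fin p) ι ℝ) (k : ℕ) : ℕ :=
  obsRank A C (k + 1) - obsRank A C k

/-- The lag ℓ(C,A): the smallest k ≥ 0 with rank Ω_k = rank Ω_{k-1}. -/
def lag {ι : Type*} [Fintype ι] [DecidableEq ι] {p : ℕ}
    (A : Matrix ι ι ℝ) (C : Matrix (Fin p) ι ℝ) : ℕ :=
  sInf {k | obsRank A C (k + 1) = obsRank A C k}

/-- (C,A) is observable iff rank Ω_{n-1} = n where n is the state dimension. -/
def Observable {ι : Type*} [Fintype ι] [DecidableEq ι] {p : ℕ}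
    (A : Matrix ι ι ℝ) (C : Matrix (Fin p) ι ℝ) : Prop :=
  obsRank A C (Fintype.card ι) = Fintype.card ι

/-- Block Hankel matrix of depth k+1 built from f_0, ..., f_{T-1}. -/
def hankel {r T : ℕ} (f : Fin T → Fin r → ℝ) (k : ℕ) :
    Matrix (Fin (k + 1) × Fin r) (Fin (T - k)) ℝ :=
  Matrix.of fun ia j =>
    f ⟨(ia.1 : ℕ) + (j : ℕ), by have h1 := ia.1.isLt; have h2 := j.isLt; omega⟩ ia.2

/-- H_k : Hankel matrix of depth k+1 of the stacked data (u; y). -/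
def Hmat {m p T : ℕ} (u : Fin T → Fin m → ℝ) (y : Fin T → Fin p → ℝ) (k : ℕ) :
    Matrix ((Fin (k + 1) × Fin m) ⊕ (Fin (k + 1) × Fin p)) (Fin (T - k)) ℝ :=
  Matrix.fromRows (hankel u k) (hankel y k)

/-- G_k : H_k with its last p rows (the y_k block) deleted. -/
def Gmat {m p T : ℕ} (u : Fin T → Fin m → ℝ) (y : Fin T → Fin p → ℝ) (k : ℕ) :
    Matrix ((Fin (k + 1) × Fin m) ⊕ (Fin k × Fin p)) (Fin (T - k)) ℝ :=
  Matrix.fromRows (hankel u k)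
    (Matrix.of fun ia j =>
      y ⟨(ia.1 : ℕ) + (j : ℕ), by have h1 := ia.1.isLt; have h2 := j.isLt; omega⟩ ia.2)

/-- δ_k = rank H_k − rank G_k. -/
def delta {m p T : ℕ} (u : Fin T → Fin m → ℝ) (y : Fin T → Fin p → ℝ) (k : ℕ) : ℕ :=
  (Hmat u y k).rank - (Gmat u y k).rank

/-- (A,B,C,D) explains the data (u,y) with state sequence x. -/
def Explains {ι : Type*} [Fintype ι] {m p T : ℕ}
    (A : Matrix ι ι ℝ) (B : Matrix ι (Fin m) ℝ)
    (C : Matrix (Fin p) ι ℝ) (D : Matrix (Fin p) (Fin m) ℝ)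
    (u : Fin T → Fin m → ℝ) (y : Fin T → Fin p → ℝ) (x : Fin (T + 1) → ι → ℝ) : Prop :=
  ∀ t : Fin T,
    x t.succ = A.mulVec (x t.castSucc) + B.mulVec (u t) ∧
    y t = C.mulVec (x t.castSucc) + D.mulVec (u t)

/-- J_k(x): the state row block x_{[0,T-k-1]} stacked over the depth-(k+1) input Hankel matrix. -/
def Jmat {ι : Type*} {m T : ℕ} (u : Fin T → Fin m → ℝ) (x : Fin (T + 1) → ι → ℝ) (k : ℕ) :
    Matrix (ι ⊕ (Fin (k + 1) × Fin m)) (Fin (T - k)) ℝ :=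
  Matrix.fromRows (Matrix.of fun i j => x ⟨(j : ℕ), by have := j.isLt; omega⟩ i) (hankel u k)


lemma surj_of_rank_eq_card {r c : Type*} [Fintype r] [Fintype c] [DecidableEq c]
    (M : Matrix r c ℝ) (h : M.rank = Fintype.card r) :
    Function.Surjective M.mulVecLin := by
  rw [← LinearMap.range_eq_top]
  apply Submodule.eq_top_of_finrank_eq
  rw [show Module.finrank ℝ (LinearMap.range M.mulVecLin) = M.rank from rfl, h,
    Module.finrank_fintype_fun_eq_card]

lemma rank_eq_card_of_surj {r c : Type*} [Fintype r] [Fintype c] [DecidableEq c]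
    (M : Matrix r c ℝ) (h : Function.Surjective M.mulVecLin) :
    M.rank = Fintype.card r := by
  rw [Matrix.rank, LinearMap.range_eq_top.mpr h, finrank_top,
    Module.finrank_fintype_fun_eq_card]

lemma rank_mul_full_row {a r c : Type*} [Fintype a] [Fintype r] [Fintype c] [DecidableEq c]
    (M : Matrix a r ℝ) (J : Matrix r c ℝ) [DecidableEq r]
    (h : J.rank = Fintype.card r) : (M * J).rank = M.rank := by
  have hs := surj_of_rank_eq_card J h
  rw [Matrix.rank, Matrix.mulVecLin_mul,
    LinearMap.range_comp_of_range_eq_top _ (LinearMap.range_eq_top.mpr hs), Matrix.rank]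

lemma submatrix_id_eq_mul {r c c' : Type*} [Fintype c] [DecidableEq c]
    (M : Matrix r c ℝ) (f : c' → c) :
    M.submatrix id f = M * (1 : Matrix c c ℝ).submatrix id f := by
  ext i j
  simp [Matrix.mul_apply, Matrix.one_apply]

lemma rank_submatrix_col_le {r c c' : Type*} [Fintype c] [Fintype c'] [DecidableEq c]
    (M : Matrix r c ℝ) (f : c' → c) :
    (M.submatrix id f).rank ≤ M.rank := by
  rw [submatrix_id_eq_mul M f]
  exact Matrix.rank_mul_le_left _ _

lemma mulVecLin_submatrix_row {r r' c : Type*} [Fintype c] [DecidableEq c]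
    (M : Matrix r c ℝ) (f : r' → r) :
    (M.submatrix f id).mulVecLin = (LinearMap.funLeft ℝ ℝ f).comp M.mulVecLin := by
  ext v i
  simp [Matrix.mulVec, Matrix.submatrix, LinearMap.funLeft, dotProduct, Pi.single_apply, mul_ite]

lemma rank_submatrix_row_full {r r' c : Type*} [Fintype r] [Fintype r'] [Fintype c]
    [DecidableEq c]
    (M : Matrix r c ℝ) (f : r' → r) (hf : Function.Injective f)
    (h : M.rank = Fintype.card r) :
    (M.submatrix f id).rank = Fintype.card r' := by
  apply rank_eq_card_of_surj
  rw [mulVecLin_submatrix_row]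
  exact (LinearMap.funLeft_surjective_of_injective ℝ ℝ f hf).comp (surj_of_rank_eq_card M h)

lemma rank_fromBlocks_zero_one_core {α β γ : Type*} [Fintype α] [Fintype β] [Fintype γ]
    [DecidableEq β] (Ω : Matrix α γ ℝ) :
    (fromBlocks (0 : Matrix β γ ℝ) (1 : Matrix β β ℝ) Ω 0).rank
      = Fintype.card β + Ω.rank := by
  set Φ := fromBlocks (0 : Matrix β γ ℝ) (1 : Matrix β β ℝ) Ω 0 with hΦ
  have hmv : ∀ v : γ ⊕ β → ℝ, Φ.mulVecLin v =
      Sum.elim (v ∘ Sum.inr) (Ω.mulVec (v ∘ Sum.inl)) := by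
    intro v
    simp [Φ, Matrix.mulVecLin_apply, Matrix.fromBlocks_mulVec, Matrix.one_mulVec]
  -- kernel equivalence
  have hkermem : ∀ v : γ ⊕ β → ℝ, v ∈ LinearMap.ker Φ.mulVecLin ↔
      (v ∘ Sum.inr = 0 ∧ (v ∘ Sum.inl) ∈ LinearMap.ker Ω.mulVecLin) := by
    intro v
    rw [LinearMap.mem_ker, LinearMap.mem_ker, hmv]
    constructor
    · intro h
      refine ⟨funext fun b => congrFun h (Sum.inl b), ?_⟩
      show Ω.mulVec (v ∘ Sum.inl) = 0
      exact funext fun a => congrFun h (Sum.inr a)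
    · rintro ⟨h1, h2⟩
      funext j
      cases j with
      | inl b => exact congrFun h1 b
      | inr a => exact congrFun h2 a
  let f : LinearMap.ker Φ.mulVecLin →ₗ[ℝ] LinearMap.ker Ω.mulVecLin :=
    LinearMap.codRestrict _
      ((LinearMap.funLeft ℝ ℝ Sum.inl).comp (LinearMap.ker Φ.mulVecLin).subtype)
      (fun v => ((hkermem v.1).mp v.2).2)
  have hbij : Function.Bijective f := by
    constructor
    · rintro ⟨v, hv⟩ ⟨w, hw⟩ h
      have h' : v ∘ Sum.inl = w ∘ Sum.inl := congrArg Subtype.val h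
      ext j
      cases j with
      | inl b => exact congrFun h' b
      | inr a =>
        have := congrFun ((hkermem v).mp hv).1 a
        have := congrFun ((hkermem w).mp hw).1 a
        simp_all [Function.comp]
    · rintro ⟨w, hw⟩
      refine ⟨⟨Sum.elim w 0, ?_⟩, ?_⟩
      · rw [hkermem]; exact ⟨rfl, by simpa using hw⟩
      · ext j; simp [f, LinearMap.funLeft]
  have hker : Module.finrank ℝ (LinearMap.ker Φ.mulVecLin)
      = Module.finrank ℝ (LinearMap.ker Ω.mulVecLin) :=
    (LinearEquiv.ofBijective f hbij).finrank_eq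
  have h1 := LinearMap.finrank_range_add_finrank_ker Φ.mulVecLin
  have h2 := LinearMap.finrank_range_add_finrank_ker Ω.mulVecLin
  rw [Module.finrank_fintype_fun_eq_card] at h1 h2
  rw [Fintype.card_sum] at h1
  have hr1 : (Φ.rank : ℕ) = Module.finrank ℝ (LinearMap.range Φ.mulVecLin) := rfl
  have hr2 : (Ω.rank : ℕ) = Module.finrank ℝ (LinearMap.range Ω.mulVecLin) := rfl
  omega

lemma rank_fromBlocks_zero_one {α β γ : Type*} [Fintype α] [Fintype β] [Fintype γ]
    [DecidableEq α] [DecidableEq β] (Ω : Matrix α γ ℝ) (Θ : Matrix α β ℝ) :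
    (fromBlocks (0 : Matrix β γ ℝ) (1 : Matrix β β ℝ) Ω Θ).rank
      = Fintype.card β + Ω.rank := by
  have hE : fromBlocks (1 : Matrix β β ℝ) (0 : Matrix β α ℝ) (-Θ) 1 *
      fromBlocks (0 : Matrix β γ ℝ) (1 : Matrix β β ℝ) Ω Θ
      = fromBlocks 0 1 Ω 0 := by
    rw [Matrix.fromBlocks_multiply]
    simp
  have hdet : IsUnit (fromBlocks (1 : Matrix β β ℝ) (0 : Matrix β α ℝ) (-Θ) 1).det := by
    rw [Matrix.det_fromBlocks_zero₁₂]
    simp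
  have := Matrix.rank_mul_eq_right_of_isUnit_det
    (fromBlocks (1 : Matrix β β ℝ) (0 : Matrix β α ℝ) (-Θ) 1)
    (fromBlocks (0 : Matrix β γ ℝ) (1 : Matrix β β ℝ) Ω Θ) hdet
  rw [← this, hE, rank_fromBlocks_zero_one_core]
section Dyn
variable {ι : Type*} [Fintype ι] [DecidableEq ι] {m p T : ℕ}
  (A : Matrix ι ι ℝ) (B : Matrix ι (Fin m) ℝ)
  (C : Matrix (Fin p) ι ℝ) (D : Matrix (Fin p) (Fin m) ℝ)
  (u : Fin T → Fin m → ℝ) (y : Fin T → Fin p → ℝ) (x : Fin (T + 1) → ι → ℝ)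

/-- extend u by zero -/
def uext (u : Fin T → Fin m → ℝ) (n : ℕ) : Fin m → ℝ :=
  if h : n < T then u ⟨n, h⟩ else 0

lemma uext_eq (n : ℕ) (h : n < T) : uext u n = u ⟨n, h⟩ := dif_pos h

set_option maxHeartbeats 1000000 in
lemma state_formula (hE : Explains A B C D u y x) :
    ∀ (a t : ℕ) (h : t + a ≤ T),
      x ⟨t + a, by omega⟩ = (A ^ a).mulVec (x ⟨t, by omega⟩) +
        ∑ s ∈ Finset.range a, ((A ^ (a - 1 - s)) * B).mulVec (uext u (t + s)) := by
  intro a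
  induction a with
  | zero =>
    intro t h
    simp
  | succ a ih =>
    intro t h
    have hta : t + a < T := by omega
    have h1 := (hE ⟨t + a, hta⟩).1
    have hsucc : (⟨t + a, hta⟩ : Fin T).succ = ⟨t + (a + 1), by omega⟩ := by
      ext; simp [Fin.succ]; omega
    have hcast : (⟨t + a, hta⟩ : Fin T).castSucc = ⟨t + a, by omega⟩ := rfl
    rw [hsucc, hcast] at h1
    rw [h1, ih t (by omega)]
    rw [Matrix.mulVec_add, Matrix.mulVec_mulVec, ← pow_succ']
    rw [Finset.sum_range_succ]
    have hsum : A.mulVec (∑ s ∈ Finset.range a, ((A ^ (a - 1 - s)) * B).mulVec (uext u (t + s)))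
        = ∑ s ∈ Finset.range a, ((A ^ (a + 1 - 1 - s)) * B).mulVec (uext u (t + s)) := by
      rw [show A.mulVec = A.mulVecLin from rfl, map_sum]
      apply Finset.sum_congr rfl
      intro s hs
      rw [Finset.mem_range] at hs
      rw [Matrix.mulVecLin_apply, Matrix.mulVec_mulVec, ← Matrix.mul_assoc, ← pow_succ']
      have he : a - 1 - s + 1 = a + 1 - 1 - s := by omega
      rw [he]
    rw [hsum]
    have hlast : (A ^ (a + 1 - 1 - a) * B).mulVec (uext u (t + a)) = B.mulVec (u ⟨t + a, hta⟩) := by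
      rw [uext_eq u _ hta]
      simp
    rw [hlast]
    abel

lemma output_formula (hE : Explains A B C D u y x) (a t : ℕ) (h : t + a < T) :
    y ⟨t + a, h⟩ = (C * A ^ a).mulVec (x ⟨t, by omega⟩) +
      ∑ s ∈ Finset.range a, ((C * A ^ (a - 1 - s) * B)).mulVec (uext u (t + s)) +
      D.mulVec (uext u (t + a)) := by
  have h2 := (hE ⟨t + a, h⟩).2
  have hcast : (⟨t + a, h⟩ : Fin T).castSucc = ⟨t + a, by omega⟩ := rfl
  rw [hcast] at h2
  rw [h2, state_formula A B C D u y x hE a t (by omega)]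
  rw [Matrix.mulVec_add, Matrix.mulVec_mulVec]
  rw [uext_eq u (t + a) h]
  congr 1
  congr 1
  rw [show C.mulVec = C.mulVecLin from rfl, map_sum]
  apply Finset.sum_congr rfl
  intro s hs
  rw [Matrix.mulVecLin_apply, Matrix.mulVec_mulVec, ← Matrix.mul_assoc]

end Dyn
section Phi
variable {ι : Type*} [Fintype ι] [DecidableEq ι] {m p T : ℕ}
  (A : Matrix ι ι ℝ) (B : Matrix ι (Fin m) ℝ)
  (C : Matrix (Fin p) ι ℝ) (D : Matrix (Fin p) (Fin m) ℝ)
  (u : Fin T → Fin m → ℝ) (y : Fin T → Fin p → ℝ) (x : Fin (T + 1) → ι → ℝ)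

def thetaEnt (a s : ℕ) : Matrix (Fin p) (Fin m) ℝ :=
  if s < a then C * A ^ (a - 1 - s) * B else if s = a then D else 0

def PhiM (k : ℕ) :
    Matrix ((Fin (k + 1) × Fin m) ⊕ (Fin (k + 1) × Fin p)) (ι ⊕ (Fin (k + 1) × Fin m)) ℝ :=
  Matrix.fromBlocks 0 1 (obsMat A C k)
    (Matrix.of fun ar sl => thetaEnt A B C D (ar.1 : ℕ) (sl.1 : ℕ) ar.2 sl.2)

set_option maxHeartbeats 1000000 in
lemma Hmat_eq_Phi_mul_J (hE : Explains A B C D u y x) (k : ℕ) :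
    Hmat u y k = PhiM A B C D k * Jmat u x k := by
  ext r t
  cases r with
  | inl al =>
    rw [Matrix.mul_apply, Fintype.sum_sum_type]
    simp only [PhiM, Jmat, Hmat, Matrix.fromBlocks_apply₁₁, Matrix.fromBlocks_apply₁₂,
      Matrix.fromRows_apply_inl, Matrix.fromRows_apply_inr, Matrix.zero_apply, zero_mul,
      Finset.sum_const_zero, zero_add, Matrix.one_apply, ite_mul, one_mul]
    rw [Finset.sum_ite_eq (Finset.univ) al (fun c => hankel u k c t)]
    simp
  | inr ar =>
    obtain ⟨a, r⟩ := ar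
    rw [Matrix.mul_apply, Fintype.sum_sum_type]
    have hbound : (t : ℕ) + (a : ℕ) < T := by
      have h1 := a.isLt; have h2 := t.isLt; omega
    have hout := congrFun (output_formula A B C D u y x hE (a : ℕ) (t : ℕ) hbound) r
    have hH : Hmat u y k (Sum.inr (a, r)) t = y ⟨(t : ℕ) + (a : ℕ), hbound⟩ r := by
      simp only [Hmat, Matrix.fromRows_apply_inr, hankel, Matrix.of_apply]
      congr 2
      omega
    have h1 : (∑ c : ι, PhiM A B C D k (Sum.inr (a, r)) (Sum.inl c) * Jmat u x k (Sum.inl c) t)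
        = ((C * A ^ (a : ℕ)).mulVec (x ⟨(t : ℕ), by have := t.isLt; omega⟩)) r := by
      simp only [PhiM, Jmat, Matrix.fromBlocks_apply₂₁, Matrix.fromRows_apply_inl, obsMat,
        Matrix.of_apply, Matrix.mulVec, dotProduct]
    have h2 : (∑ sl : Fin (k + 1) × Fin m,
          PhiM A B C D k (Sum.inr (a, r)) (Sum.inr sl) * Jmat u x k (Sum.inr sl) t)
        = ∑ s ∈ Finset.range ((a : ℕ) + 1),
            ((thetaEnt A B C D (a : ℕ) s).mulVec (uext u ((t : ℕ) + s))) r := by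
      rw [Fintype.sum_prod_type]
      have hinner : ∀ s : Fin (k + 1),
          (∑ l : Fin m, PhiM A B C D k (Sum.inr (a, r)) (Sum.inr (s, l))
              * Jmat u x k (Sum.inr (s, l)) t)
          = ((thetaEnt A B C D (a : ℕ) (s : ℕ)).mulVec (uext u ((t : ℕ) + (s : ℕ)))) r := by
        intro s
        have hb : (s : ℕ) + (t : ℕ) < T := by have := s.isLt; have := t.isLt; omega
        have hu : uext u ((t : ℕ) + (s : ℕ)) = u ⟨(s : ℕ) + (t : ℕ), hb⟩ := by
          rw [uext_eq u _ (by omega)]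
          congr 1
          ext
          simp [Nat.add_comm]
        rw [hu]
        simp only [PhiM, Jmat, Matrix.fromBlocks_apply₂₂, Matrix.fromRows_apply_inr,
          hankel, Matrix.of_apply, Matrix.mulVec, dotProduct]
      simp only [hinner]
      rw [Fin.sum_univ_eq_sum_range
        (fun s => ((thetaEnt A B C D (a : ℕ) s).mulVec (uext u ((t : ℕ) + s))) r) (k + 1)]
      symm
      apply Finset.sum_subset
      · intro s hs
        simp only [Finset.mem_range] at hs ⊢
        have := a.isLt; omega
      · intro s hs hns
        simp only [Finset.mem_range] at hs hns
        have hgt : (a : ℕ) < s := by omega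
        simp only [thetaEnt]
        rw [if_neg (by omega), if_neg (by omega)]
        simp
    have hD : thetaEnt A B C D (a : ℕ) (a : ℕ) = D := by simp [thetaEnt]
    rw [hH, hout, h1, h2, Finset.sum_range_succ, hD]
    simp only [Pi.add_apply, Finset.sum_apply]
    rw [← add_assoc]
    congr 1
    congr 1
    apply Finset.sum_congr rfl
    intro s hs
    rw [Finset.mem_range] at hs
    simp [thetaEnt, hs]
end Phi
section Psi
variable {ι : Type*} [Fintype ι] [DecidableEq ι] {m p T : ℕ}
  (A : Matrix ι ι ℝ) (B : Matrix ι (Fin m) ℝ)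
  (C : Matrix (Fin p) ι ℝ) (D : Matrix (Fin p) (Fin m) ℝ)
  (u : Fin T → Fin m → ℝ) (y : Fin T → Fin p → ℝ) (x : Fin (T + 1) → ι → ℝ)

def obsMat' (k : ℕ) : Matrix (Fin k × Fin p) ι ℝ :=
  Matrix.of fun ir j => (C * A ^ (ir.1 : ℕ)) ir.2 j

lemma rank_obsMat' (k : ℕ) : (obsMat' A C k).rank = obsRank A C k := by
  cases k with
  | zero =>
    have : (obsMat' A C 0).rank ≤ Fintype.card (Fin 0 × Fin p) := Matrix.rank_le_card_height _
    simp only [obsRank]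
    simpa using this
  | succ k => rfl

def PsiM (k : ℕ) :
    Matrix ((Fin (k + 1) × Fin m) ⊕ (Fin k × Fin p)) (ι ⊕ (Fin (k + 1) × Fin m)) ℝ :=
  Matrix.fromBlocks 0 1 (obsMat' A C k)
    (Matrix.of fun ar sl => thetaEnt A B C D (ar.1 : ℕ) (sl.1 : ℕ) ar.2 sl.2)

set_option maxHeartbeats 1000000 in
lemma Gmat_eq_Psi_mul_J (hE : Explains A B C D u y x) (k : ℕ) :
    Gmat u y k = PsiM A B C D k * Jmat u x k := by
  ext r t
  cases r with
  | inl al =>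
    rw [Matrix.mul_apply, Fintype.sum_sum_type]
    simp only [PsiM, Jmat, Gmat, Matrix.fromBlocks_apply₁₁, Matrix.fromBlocks_apply₁₂,
      Matrix.fromRows_apply_inl, Matrix.fromRows_apply_inr, Matrix.zero_apply, zero_mul,
      Finset.sum_const_zero, zero_add, Matrix.one_apply, ite_mul, one_mul]
    rw [Finset.sum_ite_eq (Finset.univ) al (fun c => hankel u k c t)]
    simp
  | inr ar =>
    obtain ⟨a, r⟩ := ar
    rw [Matrix.mul_apply, Fintype.sum_sum_type]
    have hbound : (t : ℕ) + (a : ℕ) < T := by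
      have h1 := a.isLt; have h2 := t.isLt; omega
    have hout := congrFun (output_formula A B C D u y x hE (a : ℕ) (t : ℕ) hbound) r
    have hG : Gmat u y k (Sum.inr (a, r)) t = y ⟨(t : ℕ) + (a : ℕ), hbound⟩ r := by
      simp only [Gmat, Matrix.fromRows_apply_inr, Matrix.of_apply]
      congr 2
      omega
    have h1 : (∑ c : ι, PsiM A B C D k (Sum.inr (a, r)) (Sum.inl c) * Jmat u x k (Sum.inl c) t)
        = ((C * A ^ (a : ℕ)).mulVec (x ⟨(t : ℕ), by have := t.isLt; omega⟩)) r := by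
      simp only [PsiM, Jmat, Matrix.fromBlocks_apply₂₁, Matrix.fromRows_apply_inl, obsMat',
        Matrix.of_apply, Matrix.mulVec, dotProduct]
    have h2 : (∑ sl : Fin (k + 1) × Fin m,
          PsiM A B C D k (Sum.inr (a, r)) (Sum.inr sl) * Jmat u x k (Sum.inr sl) t)
        = ∑ s ∈ Finset.range ((a : ℕ) + 1),
            ((thetaEnt A B C D (a : ℕ) s).mulVec (uext u ((t : ℕ) + s))) r := by
      rw [Fintype.sum_prod_type]
      have hinner : ∀ s : Fin (k + 1),
          (∑ l : Fin m, PsiM A B C D k (Sum.inr (a, r)) (Sum.inr (s, l))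
              * Jmat u x k (Sum.inr (s, l)) t)
          = ((thetaEnt A B C D (a : ℕ) (s : ℕ)).mulVec (uext u ((t : ℕ) + (s : ℕ)))) r := by
        intro s
        have hb : (s : ℕ) + (t : ℕ) < T := by have := s.isLt; have := t.isLt; omega
        have hu : uext u ((t : ℕ) + (s : ℕ)) = u ⟨(s : ℕ) + (t : ℕ), hb⟩ := by
          rw [uext_eq u _ (by omega)]
          congr 1
          ext
          simp [Nat.add_comm]
        rw [hu]
        simp only [PsiM, Jmat, Matrix.fromBlocks_apply₂₂, Matrix.fromRows_apply_inr,
          hankel, Matrix.of_apply, Matrix.mulVec, dotProduct]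
      simp only [hinner]
      rw [Fin.sum_univ_eq_sum_range
        (fun s => ((thetaEnt A B C D (a : ℕ) s).mulVec (uext u ((t : ℕ) + s))) r) (k + 1)]
      symm
      apply Finset.sum_subset
      · intro s hs
        simp only [Finset.mem_range] at hs ⊢
        have := a.isLt; omega
      · intro s hs hns
        simp only [Finset.mem_range] at hs hns
        have hgt : (a : ℕ) < s := by omega
        simp only [thetaEnt]
        rw [if_neg (by omega), if_neg (by omega)]
        simp
    have hD : thetaEnt A B C D (a : ℕ) (a : ℕ) = D := by simp [thetaEnt]
    rw [hG, hout, h1, h2, Finset.sum_range_succ, hD]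
    simp only [Pi.add_apply, Finset.sum_apply]
    rw [← add_assoc]
    congr 1
    congr 1
    apply Finset.sum_congr rfl
    intro s hs
    rw [Finset.mem_range] at hs
    simp [thetaEnt, hs]
end Psi
section Final
variable {ι : Type*} [Fintype ι] [DecidableEq ι] {m p T : ℕ}

lemma card_rows (k : ℕ) :
    Fintype.card (ι ⊕ (Fin (k + 1) × Fin m)) = Fintype.card ι + (k + 1) * m := by
  simp [Fintype.card_sum, Fintype.card_prod]

lemma Jmat_rank_mono (u : Fin T → Fin m → ℝ) (x : Fin (T + 1) → ι → ℝ)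
    {i k : ℕ} (hk : k ≤ i)
    (hfull : (Jmat u x i).rank = Fintype.card ι + (i + 1) * m) :
    (Jmat u x k).rank = Fintype.card ι + (k + 1) * m := by
  have hJi : (Jmat u x i).rank = Fintype.card (ι ⊕ (Fin (i + 1) × Fin m)) := by
    rw [hfull, card_rows]
  let colIncl : Fin (T - i) → Fin (T - k) := fun j => ⟨(j : ℕ), by have := j.isLt; omega⟩
  let rowMap : (ι ⊕ (Fin (k + 1) × Fin m)) → (ι ⊕ (Fin (i + 1) × Fin m)) :=
    Sum.map id (Prod.map (Fin.castLE (by omega)) id)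
  have hrowinj : Function.Injective rowMap :=
    Function.Injective.sumMap (fun a b h => h)
      (Function.Injective.prodMap (Fin.castLE_injective _) (fun a b h => h))
  have hsub : (Jmat u x k).submatrix id colIncl = (Jmat u x i).submatrix rowMap id := by
    ext r j
    cases r with
    | inl c => rfl
    | inr al => rfl
  have hlow : ((Jmat u x k).submatrix id colIncl).rank
      = Fintype.card (ι ⊕ (Fin (k + 1) × Fin m)) := by
    rw [hsub]
    exact rank_submatrix_row_full _ rowMap hrowinj hJi
  have h1 : (Jmat u x k).rank ≤ Fintype.card ι + (k + 1) * m := by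
    have := Matrix.rank_le_card_height (Jmat u x k)
    rwa [card_rows] at this
  have h2 : Fintype.card ι + (k + 1) * m ≤ (Jmat u x k).rank := by
    have := rank_submatrix_col_le (Jmat u x k) colIncl
    rw [hlow, card_rows] at this
    exact this
  omega

end Final

theorem stmt9 {ι : Type*} [Fintype ι] [DecidableEq ι] {m p T : ℕ}
    (A : Matrix ι ι ℝ) (B : Matrix ι (Fin m) ℝ)
    (C : Matrix (Fin p) ι ℝ) (D : Matrix (Fin p) (Fin m) ℝ)
    (u : Fin T → Fin m → ℝ) (y : Fin T → Fin p → ℝ) (x : Fin (T + 1) → ι → ℝ)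
    (hE : Explains A B C D u y x)
    (i : ℕ) (hiT : i ≤ T - 1) (hT : 1 ≤ T)
    (hfull : (Jmat u x i).rank = Fintype.card ι + (i + 1) * m) :
    ∀ k ≤ i,
      (Jmat u x k).rank = Fintype.card ι + (k + 1) * m ∧
      (Hmat u y k).rank = (k + 1) * m + obsRank A C (k + 1) ∧
      (Gmat u y k).rank = (k + 1) * m + obsRank A C k := by
  intro k hk
  have hJk : (Jmat u x k).rank = Fintype.card ι + (k + 1) * m :=
    Jmat_rank_mono u x hk hfull
  have hJk' : (Jmat u x k).rank = Fintype.card (ι ⊕ (Fin (k + 1) × Fin m)) := by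
    rw [hJk, card_rows]
  have cardβ : Fintype.card (Fin (k + 1) × Fin m) = (k + 1) * m := by
    simp [Fintype.card_prod]
  refine ⟨hJk, ?_, ?_⟩
  · rw [Hmat_eq_Phi_mul_J A B C D u y x hE k, rank_mul_full_row _ _ hJk']
    show (Matrix.fromBlocks 0 1 (obsMat A C k) _).rank = _
    rw [rank_fromBlocks_zero_one, cardβ]
    rfl
  · rw [Gmat_eq_Psi_mul_J A B C D u y x hE k, rank_mul_full_row _ _ hJk']
    show (Matrix.fromBlocks 0 1 (obsMat' A C k) _).rank = _
    rw [rank_fromBlocks_zero_one, cardβ, rank_obsMat']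
end
end

section
/- Let q ∈ [0,T−1] and suppose δ_q = 0 where δ_k = rank H_k − rank G_k, δ_{−1} = p. If an explaining system (A,B,C,D) ∈ 𝓔(ℓ,n) with lag ℓ exists for the data and T ≥ ℓ+1, then ℓ ≥ q, where q = min{k ∈ [0,T−1] : δ_k = 0}. -/
open Matrix
noncomputable section

/-- If every row of `M` lies in the span of the rows of `N`, then `rank M ≤ rank N`. -/
lemma rank_le_of_rows_mem {k l o : Type*} [Fintype k] [Fintype l] [Fintype o]
    (M : Matrix k o ℝ) (N : Matrix l o ℝ)
    (h : ∀ i, M i ∈ Submodule.span ℝ (Set.range N)) : M.rank ≤ N.rank := by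
  rw [M.rank_eq_finrank_span_row, N.rank_eq_finrank_span_row]
  apply Submodule.finrank_mono
  rw [Submodule.span_le]
  rintro v ⟨i, rfl⟩
  exact h i

lemma rank_eq_finrank_span_rows {k o : Type*} [Fintype k] [Fintype o]
    (M : Matrix k o ℝ) :
    M.rank = Module.finrank ℝ (Submodule.span ℝ (Set.range M)) :=
  M.rank_eq_finrank_span_row

lemma row_mul {k l o : Type*} [Fintype k] [Fintype l] [Fintype o]
    (M : Matrix k l ℝ) (N : Matrix l o ℝ) (a : k) :
    Matrix.vecMul (M a) N = (M * N) a := by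
  funext b
  simp [Matrix.vecMul, Matrix.mul_apply, dotProduct]

lemma obsRank_mono {ι : Type*} [Fintype ι] [DecidableEq ι] {p : ℕ}
    (A : Matrix ι ι ℝ) (C : Matrix (Fin p) ι ℝ) (k : ℕ) :
    obsRank A C k ≤ obsRank A C (k + 1) := by
  cases k with
  | zero => simp [obsRank]
  | succ k =>
      apply rank_le_of_rows_mem
      intro ir
      apply Submodule.subset_span
      refine ⟨(ir.1.castSucc, ir.2), ?_⟩
      funext j
      simp [obsMat]

lemma obsRank_le_card {ι : Type*} [Fintype ι] [DecidableEq ι] {p : ℕ}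
    (A : Matrix ι ι ℝ) (C : Matrix (Fin p) ι ℝ) (k : ℕ) :
    obsRank A C k ≤ Fintype.card ι := by
  cases k with
  | zero => simp [obsRank]
  | succ k => exact Matrix.rank_le_card_width _

lemma lag_spec {ι : Type*} [Fintype ι] [DecidableEq ι] {p : ℕ}
    (A : Matrix ι ι ℝ) (C : Matrix (Fin p) ι ℝ) :
    obsRank A C (lag A C + 1) = obsRank A C (lag A C) := by
  have hne : {k | obsRank A C (k + 1) = obsRank A C k}.Nonempty := by
    by_contra h
    have h' : ∀ k, obsRank A C k < obsRank A C (k + 1) := by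
      intro k
      rcases lt_or_eq_of_le (obsRank_mono A C k) with h1 | h1
      · exact h1
      · exact absurd ⟨k, h1.symm⟩ h
    have hk : ∀ k, k ≤ obsRank A C k := by
      intro k
      induction k with
      | zero => exact Nat.zero_le _
      | succ k ih => exact Nat.succ_le_of_lt (lt_of_le_of_lt ih (h' k))
    have h1 := hk (Fintype.card ι + 1)
    have h2 := obsRank_le_card A C (Fintype.card ι + 1)
    omega
  exact Nat.sInf_mem hne

lemma delta_eq_zero_of_obsRank {n m p T : ℕ}
    (u : Fin T → Fin m → ℝ) (y : Fin T → Fin p → ℝ)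
    (A : Matrix (Fin n) (Fin n) ℝ) (B : Matrix (Fin n) (Fin m) ℝ)
    (C : Matrix (Fin p) (Fin n) ℝ) (D : Matrix (Fin p) (Fin m) ℝ)
    (x : Fin (T + 1) → Fin n → ℝ) (hE : Explains A B C D u y x)
    (ℓ : ℕ) (hrank : obsRank A C (ℓ + 1) = obsRank A C ℓ)
    (hℓT : ℓ + 1 ≤ T) :
    delta u y ℓ = 0 := by
  -- truncated signals, with junk outside the range
  set uu : ℕ → Fin (T - ℓ) → Fin m → ℝ :=
    fun i j => if h : i + (j : ℕ) < T then u ⟨i + (j : ℕ), h⟩ else 0 with huu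
  set yy : ℕ → Fin (T - ℓ) → Fin p → ℝ :=
    fun i j => if h : i + (j : ℕ) < T then y ⟨i + (j : ℕ), h⟩ else 0 with hyy
  set xx : ℕ → Fin (T - ℓ) → Fin n → ℝ :=
    fun i j => if h : i + (j : ℕ) < T + 1 then x ⟨i + (j : ℕ), h⟩ else 0 with hxx
  set S : Submodule ℝ (Fin (T - ℓ) → ℝ) :=
    Submodule.span ℝ (Set.range (Gmat u y ℓ)) with hS
  have hjlt : ∀ j : Fin (T - ℓ), (j : ℕ) < T - ℓ := fun j => j.isLt
  -- u-rows of G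
  have hU : ∀ i : ℕ, i ≤ ℓ → ∀ c, (fun j => uu i j c) ∈ S := by
    intro i hi c
    have : (fun j => uu i j c) = Gmat u y ℓ (Sum.inl (⟨i, by omega⟩, c)) := by
      funext j
      have hj := hjlt j
      have h : i + (j : ℕ) < T := by omega
      simp only [huu]
      rw [dif_pos h]
      rfl
    rw [this]
    exact Submodule.subset_span ⟨_, rfl⟩
  -- y-rows of G
  have hY : ∀ i : ℕ, i < ℓ → ∀ a, (fun j => yy i j a) ∈ S := by
    intro i hi a
    have : (fun j => yy i j a) = Gmat u y ℓ (Sum.inr (⟨i, hi⟩, a)) := by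
      funext j
      have hj := hjlt j
      have h : i + (j : ℕ) < T := by omega
      simp only [hyy]
      rw [dif_pos h]
      rfl
    rw [this]
    exact Submodule.subset_span ⟨_, rfl⟩
  -- dynamics
  have hxs : ∀ (i : ℕ) (j : Fin (T - ℓ)), i + (j : ℕ) < T →
      xx (i + 1) j = A.mulVec (xx i j) + B.mulVec (uu i j) := by
    intro i j h
    have h1 : i + (j : ℕ) < T + 1 := by omega
    have h2 : i + 1 + (j : ℕ) < T + 1 := by omega
    simp only [hxx, huu]
    rw [dif_pos h2, dif_pos h1, dif_pos h]
    have e1 : (⟨i + 1 + (j : ℕ), h2⟩ : Fin (T + 1)) = (⟨i + (j : ℕ), h⟩ : Fin T).succ := by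
      ext; simp [Fin.val_succ]; omega
    have e2 : (⟨i + (j : ℕ), h1⟩ : Fin (T + 1)) = (⟨i + (j : ℕ), h⟩ : Fin T).castSucc := by
      ext; simp
    rw [e1, e2]
    exact (hE _).1
  have hys : ∀ (i : ℕ) (j : Fin (T - ℓ)), i + (j : ℕ) < T →
      yy i j = C.mulVec (xx i j) + D.mulVec (uu i j) := by
    intro i j h
    have h1 : i + (j : ℕ) < T + 1 := by omega
    simp only [hxx, huu, hyy]
    rw [dif_pos h, dif_pos h1, dif_pos h]
    have e2 : (⟨i + (j : ℕ), h1⟩ : Fin (T + 1)) = (⟨i + (j : ℕ), h⟩ : Fin T).castSucc := by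
      ext; simp
    rw [e2]
    exact (hE _).2
  -- the "state" rows
  set vc : ℕ → (Fin n → ℝ) → (Fin (T - ℓ) → ℝ) :=
    fun s v j => v ⬝ᵥ xx s j with hvc
  -- key induction: Markov expansion
  have hM : ∀ (d s : ℕ), s + d ≤ ℓ → ∀ a,
      ((fun j => yy (s + d) j a) - vc s ((C * A ^ d) a)) ∈ S := by
    intro d
    induction d with
    | zero =>
        intro s hs a
        have key : ((fun j => yy (s + 0) j a) - vc s ((C * A ^ (0 : ℕ)) a))
            = ∑ c, D a c • (fun j => uu s j c) := by
          funext j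
          have h : s + (j : ℕ) < T := by have := hjlt j; omega
          have hy := hys s j h
          simp only [Pi.sub_apply, hvc, Finset.sum_apply, Pi.smul_apply, smul_eq_mul,
            Nat.add_zero, pow_zero, Matrix.mul_one]
          rw [hy]
          simp [Matrix.mulVec, dotProduct, add_sub_cancel_left]
        rw [key]
        exact Submodule.sum_mem _ fun c _ =>
          Submodule.smul_mem _ _ (hU s (by omega) c)
    | succ d ih =>
        intro s hs a
        have hnat : s + (d + 1) = (s + 1) + d := by omega
        rw [hnat]
        have hid : vc s ((C * A ^ (d + 1)) a)
            = vc (s + 1) ((C * A ^ d) a)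
              - ∑ c, ((C * A ^ d * B) a c) • (fun j => uu s j c) := by
          funext j
          have h : s + (j : ℕ) < T := by have := hjlt j; omega
          have hx := hxs s j h
          simp only [hvc, Pi.sub_apply, Finset.sum_apply, Pi.smul_apply, smul_eq_mul]
          rw [hx, dotProduct_add, Matrix.dotProduct_mulVec, Matrix.dotProduct_mulVec,
            row_mul, row_mul]
          have hpow : C * A ^ d * A = C * A ^ (d + 1) := by
            rw [pow_succ, Matrix.mul_assoc]
          rw [hpow]
          simp [dotProduct]
        rw [hid]
        have h1 := ih (s + 1) (by omega) a
        have h2 : (∑ c, ((C * A ^ d * B) a c) • (fun j => uu s j c)) ∈ S :=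
          Submodule.sum_mem _ fun c _ =>
            Submodule.smul_mem _ _ (hU s (by omega) c)
        have e : (fun j => yy (s + 1 + d) j a)
              - (vc (s + 1) ((C * A ^ d) a)
                  - ∑ c, ((C * A ^ d * B) a c) • (fun j => uu s j c))
            = ((fun j => yy (s + 1 + d) j a) - vc (s + 1) ((C * A ^ d) a))
              + ∑ c, ((C * A ^ d * B) a c) • (fun j => uu s j c) := by
          abel
        rw [e]
        exact Submodule.add_mem _ h1 h2
  -- the linear map v ↦ vc 0 v
  set L : (Fin n → ℝ) →ₗ[ℝ] (Fin (T - ℓ) → ℝ) :=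
    (Matrix.of fun (j : Fin (T - ℓ)) b => xx 0 j b).mulVecLin with hL
  have hLv : ∀ v, L v = vc 0 v := by
    intro v
    funext j
    simp [hL, Matrix.mulVec, dotProduct, hvc, mul_comm]
  have hgen : ∀ d : ℕ, d < ℓ → ∀ b, vc 0 ((C * A ^ d) b) ∈ S := by
    intro d hd b
    have h1 := hM d 0 (by omega) b
    have h2 := hY d hd b
    have e : vc 0 ((C * A ^ d) b)
        = (fun j => yy (0 + d) j b)
          - ((fun j => yy (0 + d) j b) - vc 0 ((C * A ^ d) b)) := by
      abel
    rw [e]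
    refine Submodule.sub_mem _ ?_ h1
    simpa using h2
  -- the crucial row: vc 0 ((C A^ℓ) a) ∈ S
  have hrow : ∀ a, vc 0 ((C * A ^ ℓ) a) ∈ S := by
    intro a
    cases ℓ with
    | zero =>
        have h0 : Module.finrank ℝ (Submodule.span ℝ (Set.range (obsMat A C 0))) = 0 := by
          have h1 : obsRank A C 1 = 0 := by rw [hrank]; rfl
          rw [← rank_eq_finrank_span_rows]
          exact h1
        have hbot : Submodule.span ℝ (Set.range (obsMat A C 0)) = ⊥ :=
          Submodule.finrank_eq_zero.mp h0
        have hC : (C * A ^ (0 : ℕ)) a = 0 := by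
          have hm : obsMat A C 0 ((0 : Fin 1), a)
              ∈ Submodule.span ℝ (Set.range (obsMat A C 0)) :=
            Submodule.subset_span ⟨_, rfl⟩
          rw [hbot, Submodule.mem_bot] at hm
          have : obsMat A C 0 ((0 : Fin 1), a) = (C * A ^ (0 : ℕ)) a := by
            funext b; simp [obsMat]
          rwa [this] at hm
        rw [hC]
        have : vc 0 (0 : Fin n → ℝ) = 0 := by
          funext j; simp [hvc]
        rw [this]
        exact Submodule.zero_mem _
    | succ k =>
        -- rank equality gives span equality
        set Ωk : Submodule ℝ (Fin n → ℝ) :=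
          Submodule.span ℝ (Set.range (obsMat A C k)) with hΩk
        set Ωk1 : Submodule ℝ (Fin n → ℝ) :=
          Submodule.span ℝ (Set.range (obsMat A C (k + 1))) with hΩk1
        have hle : Ωk ≤ Ωk1 := by
          rw [hΩk, Submodule.span_le]
          rintro v ⟨⟨i, b⟩, rfl⟩
          apply Submodule.subset_span
          refine ⟨(i.castSucc, b), ?_⟩
          funext j
          simp [obsMat]
        have hfr : Module.finrank ℝ Ωk1 ≤ Module.finrank ℝ Ωk := by
          have e1 : (obsMat A C (k + 1)).rank = (obsMat A C k).rank := hrank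
          rw [hΩk, hΩk1, ← rank_eq_finrank_span_rows, ← rank_eq_finrank_span_rows, e1]
        have heq : Ωk = Ωk1 := Submodule.eq_of_le_of_finrank_le hle hfr
        have hmem : (C * A ^ (k + 1)) a ∈ Ωk := by
          rw [heq]
          apply Submodule.subset_span
          exact ⟨((⟨k + 1, Nat.lt_succ_self _⟩ : Fin (k + 2)), a), rfl⟩
        have himg : Ωk ≤ S.comap L := by
          rw [hΩk, Submodule.span_le]
          rintro v ⟨⟨i, b⟩, rfl⟩
          have hg : L (obsMat A C k (i, b)) ∈ S := by
            rw [hLv]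
            exact hgen i (by omega) b
          exact hg
        have := himg hmem
        rw [Submodule.mem_comap, hLv] at this
        exact this
  -- rank comparison
  have hrk : (Hmat u y ℓ).rank ≤ (Gmat u y ℓ).rank := by
    apply rank_le_of_rows_mem
    rintro (⟨i, c⟩ | ⟨i, a⟩)
    · exact Submodule.subset_span ⟨Sum.inl (i, c), rfl⟩
    · by_cases hi : (i : ℕ) < ℓ
      · refine Submodule.subset_span ⟨Sum.inr (⟨(i : ℕ), hi⟩, a), ?_⟩
        funext j
        rfl
      · have hiℓ : (i : ℕ) = ℓ := by have := i.isLt; omega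
        have key : Hmat u y ℓ (Sum.inr (i, a)) = (fun j => yy ℓ j a) := by
          funext j
          have h : ℓ + (j : ℕ) < T := by have := hjlt j; omega
          simp only [hyy]
          rw [dif_pos h]
          show y _ a = y _ a
          congr 1
          ext
          simp [Hmat, hankel, hiℓ]
        rw [key]
        have h1 := hM ℓ 0 (by omega) a
        have h2 := hrow a
        have e : (fun j => yy ℓ j a)
            = ((fun j => yy (0 + ℓ) j a) - vc 0 ((C * A ^ ℓ) a)) + vc 0 ((C * A ^ ℓ) a) := by
          funext j
          simp
        rw [e]
        exact Submodule.add_mem _ h1 h2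
  simp only [delta]
  omega

theorem stmt14 {n m p T : ℕ}
    (u : Fin T → Fin m → ℝ) (y : Fin T → Fin p → ℝ)
    (q : ℕ) (hqT : q ≤ T - 1) (hq0 : delta u y q = 0)
    (hqmin : ∀ j < q, delta u y j ≠ 0)
    (A : Matrix (Fin n) (Fin n) ℝ) (B : Matrix (Fin n) (Fin m) ℝ)
    (C : Matrix (Fin p) (Fin n) ℝ) (D : Matrix (Fin p) (Fin m) ℝ)
    (x : Fin (T + 1) → Fin n → ℝ)
    (hE : Explains A B C D u y x)
    (hT : lag A C + 1 ≤ T) :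
    q ≤ lag A C := by
  have hmem : obsRank A C (lag A C + 1) = obsRank A C (lag A C) := lag_spec A C
  have hδ : delta u y (lag A C) = 0 :=
    delta_eq_zero_of_obsRank u y A B C D x hE (lag A C) hmem hT
  by_contra hq
  exact hqmin (lag A C) (by omega) hδ
end
end
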